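/- arXiv:1407.4553 — 2 statements merged into one kernel-verified Lean document; each statement's English description precedes it below -/
import Mathlib

section
/- Let f be a germ of holomorphic diffeomorphism at 0 ∈ ℂ with f'(0) = e^{2πiλ}, λ ∈ ℝ \ ℚ. If f is formally linearizable and some iterate f^k (k ≥ 1) is analytically linearizable, i.e., there is a local biholomorphism h fixing 0 with h ∘ f^k ∘ h⁻¹ equal to multiplication by (f'(0))^k, then f itself is analytically linearizable. -/
open Complex Filter

/-- If a germ `f ∈ Diff(ℂ,0)` with non-resonant multiplier `f'(0) = e^{2πiλ}`,
`λ ∈ ℝ \ ℚ`, is formally linearizable (there are polynomial changes of coordinates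
conjugating `f` to its linear part to every finite order) and some iterate `f^[k]`,
`k ≥ 1`, is analytically linearizable, then `f` itself is analytically linearizable. -/
theorem nonresonant_iterate_linearizable_implies_linearizable
    (f : ℂ → ℂ) (hf : AnalyticAt ℂ f 0) (hf0 : f 0 = 0)
    (lam : ℝ) (hirr : Irrational lam)
    (hmult : deriv f 0 = Complex.exp (2 * Real.pi * Complex.I * (lam : ℂ)))
    (hformal : ∀ N : ℕ, ∃ P : Polynomial ℂ, P.coeff 0 = 0 ∧ P.coeff 1 = 1 ∧
      ∀ n ≤ N, iteratedDeriv n (fun z => P.eval (f z) - deriv f 0 * P.eval z) 0 = 0)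
    (k : ℕ) (hk : 1 ≤ k)
    (hlin : ∃ h : ℂ → ℂ, AnalyticAt ℂ h 0 ∧ h 0 = 0 ∧ deriv h 0 ≠ 0 ∧
      ∀ᶠ z in nhds (0 : ℂ), h (f^[k] z) = (deriv f 0) ^ k * h z) :
    ∃ h : ℂ → ℂ, AnalyticAt ℂ h 0 ∧ h 0 = 0 ∧ deriv h 0 ≠ 0 ∧
      ∀ᶠ z in nhds (0 : ℂ), h (f z) = deriv f 0 * h z := by
  obtain ⟨h, hha, hh0, hhd, hev⟩ := hlin
  set μ := deriv f 0 with hμdef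
  have hμ0 : μ ≠ 0 := by rw [hmult]; exact Complex.exp_ne_zero _
  have hiter0 : ∀ j, f^[j] 0 = 0 := fun j => Function.iterate_fixed hf0 j
  have hiterA : ∀ j, AnalyticAt ℂ (f^[j]) 0 := by
    intro j
    induction j with
    | zero => simpa using (analyticAt_id : AnalyticAt ℂ id (0 : ℂ))
    | succ n ih =>
      rw [Function.iterate_succ']
      have hfA : AnalyticAt ℂ f (f^[n] 0) := by rw [hiter0]; exact hf
      exact hfA.comp ih
  have hiterD : ∀ j, HasDerivAt (f^[j]) (μ ^ j) 0 := by
    intro j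
    induction j with
    | zero => simpa using hasDerivAt_id (0 : ℂ)
    | succ n ih =>
      have hfD : HasDerivAt f μ (f^[n] 0) := by
        rw [hiter0]; exact hf.differentiableAt.hasDerivAt
      have := hfD.comp 0 ih
      rw [Function.iterate_succ']
      simpa [pow_succ, mul_comm] using this
  -- the averaged conjugacy
  refine ⟨fun z => ∑ j ∈ Finset.range k, μ ^ (k - 1 - j) * h (f^[j] z), ?_, ?_, ?_, ?_⟩
  · apply Finset.analyticAt_fun_sum
    intro j _
    refine analyticAt_const.mul ?_
    have hhA : AnalyticAt ℂ h (f^[j] 0) := by rw [hiter0]; exact hha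
    exact hhA.comp (hiterA j)
  · simp [hiter0, hh0]
  · have hD : HasDerivAt (fun z => ∑ j ∈ Finset.range k, μ ^ (k - 1 - j) * h (f^[j] z))
        (∑ j ∈ Finset.range k, μ ^ (k - 1 - j) * (deriv h 0 * μ ^ j)) 0 := by
      apply HasDerivAt.fun_sum
      intro j _
      have hhD : HasDerivAt h (deriv h 0) (f^[j] 0) := by
        rw [hiter0]; exact hha.differentiableAt.hasDerivAt
      exact (hhD.comp 0 (hiterD j)).const_mul _
    rw [hD.deriv]
    have : ∀ j ∈ Finset.range k, μ ^ (k - 1 - j) * (deriv h 0 * μ ^ j)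
        = μ ^ (k - 1) * deriv h 0 := by
      intro j hj
      rw [Finset.mem_range] at hj
      have h1 : (k - 1 - j) + j = k - 1 := by omega
      rw [mul_comm (deriv h 0), ← mul_assoc, ← pow_add, h1]
    rw [Finset.sum_congr rfl this, Finset.sum_const, Finset.card_range]
    simp only [nsmul_eq_mul]
    exact mul_ne_zero (Nat.cast_ne_zero.mpr (by omega)) (mul_ne_zero (pow_ne_zero _ hμ0) hhd)
  · filter_upwards [hev] with z hz
    have key : (∑ j ∈ Finset.range (k + 1), μ ^ (k - j) * h (f^[j] z))
        = (∑ j ∈ Finset.range k, μ ^ (k - 1 - j) * h (f^[j] (f z))) + μ ^ k * h z := by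
      rw [Finset.sum_range_succ']
      have e1 : ∀ j ∈ Finset.range k, μ ^ (k - (j + 1)) * h (f^[j + 1] z)
          = μ ^ (k - 1 - j) * h (f^[j] (f z)) := by
        intro j hj
        rw [Finset.mem_range] at hj
        have hkj : k - (j + 1) = k - 1 - j := by omega
        rw [hkj, ← Function.iterate_succ_apply]
      rw [Finset.sum_congr rfl e1]
      simp
    have key2 : (∑ j ∈ Finset.range (k + 1), μ ^ (k - j) * h (f^[j] z))
        = μ * (∑ j ∈ Finset.range k, μ ^ (k - 1 - j) * h (f^[j] z)) + μ ^ k * h z := by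
      have e2 : ∀ j ∈ Finset.range k, μ ^ (k - j) * h (f^[j] z)
          = μ * (μ ^ (k - 1 - j) * h (f^[j] z)) := by
        intro j hj
        rw [Finset.mem_range] at hj
        have h1 : k - j = (k - 1 - j) + 1 := by omega
        rw [h1, pow_succ, mul_comm (μ ^ (k - 1 - j)) μ, mul_assoc]
      rw [Finset.sum_range_succ, Finset.sum_congr rfl e2, ← Finset.mul_sum]
      simp [hz]
    have := key.symm.trans key2
    exact add_right_cancel this
end

section
/- Every germ of holomorphic diffeomorphism f of (ℂ,0) with |f'(0)| ≠ 1 is analytically linearizable: there is a convergent power series h(z) = z + O(z²) with h ∘ f ∘ h⁻¹(z) = f'(0)·z (Koenigs' theorem). -/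
open Complex Filter Metric

lemma iterate_hasDerivAt_zero (f : ℂ → ℂ) (c : ℂ) (hfd : HasDerivAt f c 0)
    (hf0 : f 0 = 0) : ∀ n : ℕ, HasDerivAt (f^[n]) (c ^ n) 0 := by
  intro n
  induction n with
  | zero => simpa using hasDerivAt_id (0:ℂ)
  | succ n ih =>
    rw [Function.iterate_succ']
    have hit0 : f^[n] (0:ℂ) = 0 := Function.iterate_fixed hf0 n
    have h1 : HasDerivAt f c (f^[n] 0) := by rw [hit0]; exact hfd
    have h2 := HasDerivAt.comp (0:ℂ) h1 ih
    rw [pow_succ]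
    rw [mul_comm]
    exact h2

set_option maxHeartbeats 1000000 in
lemma koenigs_aux (f : ℂ → ℂ) (hf : AnalyticAt ℂ f 0) (hf0 : f 0 = 0)
    (hne : deriv f 0 ≠ 0) (hlt : ‖deriv f 0‖ < 1) :
    ∃ h : ℂ → ℂ, AnalyticAt ℂ h 0 ∧ h 0 = 0 ∧ deriv h 0 = 1 ∧
      ∀ᶠ z in nhds (0 : ℂ), h (f z) = deriv f 0 * h z := by
  set μ := deriv f 0 with hμ
  have hμ0 : (0:ℝ) < ‖μ‖ := by
    exact norm_pos_iff.mpr hne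
  clear_value μ
  -- quadratic bound
  obtain ⟨p, hp⟩ := id hf
  have hquad : (fun y => f y - μ * y) =O[nhds 0] fun y => ‖y‖ ^ 2 := by
    have h2 := hp.isBigO_sub_partialSum_pow 2
    have hps : ∀ y : ℂ, p.partialSum 2 y = μ * y := by
      intro y
      have : p.partialSum 2 y = ∑ k ∈ Finset.range 2, (p k fun _ => y) := rfl
      rw [this, Finset.sum_range_succ, Finset.sum_range_one]
      have h0 : (p 0 fun _ => y) = f 0 := hp.coeff_zero _
      have h1 : (p 1 fun _ => y) = y ^ 1 • p.coeff 1 :=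
        FormalMultilinearSeries.apply_eq_pow_smul_coeff
      have hc1 : p.coeff 1 = μ := by
        rw [hμ, hp.deriv]; rfl
      rw [h0, h1, hc1, hf0]
      simp [mul_comm]
    have : (fun y : ℂ => f (0 + y) - p.partialSum 2 y) = fun y => f y - μ * y := by
      funext y; rw [zero_add, hps]
    rwa [this] at h2
  rw [Asymptotics.isBigO_iff] at hquad
  obtain ⟨C₀, hC₀⟩ := hquad
  set C := max C₀ 1 with hC
  have hC1 : (0:ℝ) < C := lt_of_lt_of_le one_pos (le_max_right _ _)
  have hCbd : ∀ᶠ y in nhds (0:ℂ), ‖f y - μ * y‖ ≤ C * ‖y‖ ^ 2 := by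
    filter_upwards [hC₀] with y hy
    calc ‖f y - μ * y‖ ≤ C₀ * ‖‖y‖ ^ 2‖ := hy
      _ ≤ C * ‖y‖ ^ 2 := by
          rw [Real.norm_of_nonneg (by positivity)]
          exact mul_le_mul_of_nonneg_right (le_max_left _ _) (by positivity)
  rw [Metric.eventually_nhds_iff] at hCbd
  obtain ⟨r₀, hr₀, hr₀bd⟩ := hCbd
  -- radius of analyticity
  have han : ∀ᶠ z in nhds (0:ℂ), AnalyticAt ℂ f z := hf.eventually_analyticAt
  rw [Metric.eventually_nhds_iff] at han
  obtain ⟨r₁, hr₁, hr₁an⟩ := han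
  -- constants
  set m := ‖μ‖ with hm
  set a : ℝ := (m + Real.sqrt m) / 2 with ha
  have hsm : m < Real.sqrt m := (Real.lt_sqrt hμ0.le).2 (by nlinarith)
  have hsm1 : Real.sqrt m < 1 := by
    rw [show (1:ℝ) = Real.sqrt 1 by simp]
    exact Real.sqrt_lt_sqrt hμ0.le hlt
  have hma : m < a := by rw [ha]; linarith
  have ha0 : 0 < a := lt_trans hμ0 hma
  have ha1 : a < 1 := by rw [ha]; linarith
  have ha2 : a ^ 2 < m := by
    have : a < Real.sqrt m := by rw [ha]; linarith
    exact (Real.lt_sqrt ha0.le).1 this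
  -- radius r
  set r : ℝ := min (min (r₀ / 2) (r₁ / 2)) ((a - m) / C) with hrdef
  have hr : 0 < r := by
    apply lt_min (lt_min (by linarith) (by linarith))
    apply div_pos (by linarith) hC1
  have hrr₀ : r < r₀ := lt_of_le_of_lt ((min_le_left _ _).trans (min_le_left _ _)) (by linarith)
  have hrr₁ : r < r₁ := lt_of_le_of_lt ((min_le_left _ _).trans (min_le_right _ _)) (by linarith)
  have hrC : C * r ≤ a - m := by
    have : r ≤ (a - m) / C := min_le_right _ _
    calc C * r ≤ C * ((a - m) / C) := by nlinarith
      _ = a - m := by field_simp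
  -- key contraction bound
  have hfan : ∀ z : ℂ, ‖z‖ ≤ r → AnalyticAt ℂ f z := by
    intro z hz
    exact hr₁an (by simpa [dist_eq_norm] using lt_of_le_of_lt hz hrr₁)
  have hqb : ∀ z : ℂ, ‖z‖ ≤ r → ‖f z - μ * z‖ ≤ C * ‖z‖ ^ 2 := by
    intro z hz
    exact hr₀bd (by simpa [dist_eq_norm] using lt_of_le_of_lt hz hrr₀)
  have hK1 : ∀ z : ℂ, ‖z‖ ≤ r → ‖f z‖ ≤ a * ‖z‖ := by
    intro z hz
    have h1 : ‖f z‖ ≤ ‖f z - μ * z‖ + ‖μ * z‖ := by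
      simpa using norm_add_le (f z - μ * z) (μ * z)
    have h2 : ‖μ * z‖ = m * ‖z‖ := by simp [hm, norm_mul]
    have h3 : C * ‖z‖ ^ 2 ≤ C * r * ‖z‖ := by
      nlinarith [mul_nonneg (mul_nonneg hC1.le (sub_nonneg.2 hz)) (norm_nonneg z)]
    calc ‖f z‖ ≤ C * ‖z‖ ^ 2 + m * ‖z‖ := by rw [← h2]; linarith [hqb z hz]
      _ ≤ C * r * ‖z‖ + m * ‖z‖ := by linarith
      _ ≤ (a - m) * ‖z‖ + m * ‖z‖ := by nlinarith [norm_nonneg z]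
      _ = a * ‖z‖ := by ring
  -- iterates
  have hK3 : ∀ n : ℕ, ∀ z : ℂ, ‖z‖ ≤ r → ‖f^[n] z‖ ≤ a ^ n * ‖z‖ := by
    intro n
    induction n with
    | zero => intro z hz; simp
    | succ n ih =>
      intro z hz
      rw [Function.iterate_succ_apply']
      have hin : ‖f^[n] z‖ ≤ r := by
        calc ‖f^[n] z‖ ≤ a ^ n * ‖z‖ := ih z hz
          _ ≤ 1 * r := by
              apply mul_le_mul (pow_le_one₀ ha0.le ha1.le) hz (norm_nonneg z) one_pos.le
          _ = r := one_mul r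
      calc ‖f (f^[n] z)‖ ≤ a * ‖f^[n] z‖ := hK1 _ hin
        _ ≤ a * (a ^ n * ‖z‖) := by nlinarith [ih z hz]
        _ = a ^ (n+1) * ‖z‖ := by ring
  have hmem : ∀ n : ℕ, ∀ z : ℂ, ‖z‖ ≤ r → ‖f^[n] z‖ ≤ r := by
    intro n z hz
    calc ‖f^[n] z‖ ≤ a ^ n * ‖z‖ := hK3 n z hz
      _ ≤ 1 * r := mul_le_mul (pow_le_one₀ ha0.le ha1.le) hz (norm_nonneg z) one_pos.le
      _ = r := one_mul r
  clear_value m a r C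
  -- the sequence of renormalized iterates
  set F : ℕ → ℂ → ℂ := fun n z => μ⁻¹ ^ n * f^[n] z with hFdef
  set g : ℕ → ℂ → ℂ := fun n z => F (n + 1) z - F n z with hgdef
  set u : ℕ → ℝ := fun n => C * r ^ 2 / m * (a ^ 2 / m) ^ n with hudef
  have hgb : ∀ n : ℕ, ∀ z ∈ closedBall (0:ℂ) r, ‖g n z‖ ≤ u n := by
    intro n z hz
    rw [mem_closedBall, dist_eq_norm, sub_zero] at hz
    have hgeq : g n z = μ⁻¹ ^ (n + 1) * (f (f^[n] z) - μ * f^[n] z) := by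
      rw [hgdef]
      simp only [hFdef]
      rw [Function.iterate_succ_apply']
      field_simp
      linear_combination ((1 / μ) ^ n * f^[n] z) * mul_one_div_cancel hne
    have hw : ‖f^[n] z‖ ≤ r := hmem n z hz
    have h1 : ‖f (f^[n] z) - μ * f^[n] z‖ ≤ C * ‖f^[n] z‖ ^ 2 := hqb _ hw
    have h2 : ‖f^[n] z‖ ^ 2 ≤ (a ^ n) ^ 2 * r ^ 2 := by
      have h3 : ‖f^[n] z‖ ≤ a ^ n * r := by
        calc ‖f^[n] z‖ ≤ a ^ n * ‖z‖ := hK3 n z hz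
          _ ≤ a ^ n * r := mul_le_mul_of_nonneg_left hz (pow_nonneg ha0.le n)
      calc ‖f^[n] z‖ ^ 2 ≤ (a ^ n * r) ^ 2 := pow_le_pow_left₀ (norm_nonneg _) h3 2
        _ = (a ^ n) ^ 2 * r ^ 2 := by ring
    have hnorm : ‖g n z‖ = (m ^ (n + 1))⁻¹ * ‖f (f^[n] z) - μ * f^[n] z‖ := by
      rw [hgeq, norm_mul]
      congr 1
      rw [norm_pow, norm_inv]
      simp [hm]
    rw [hnorm]
    have hmn : (0:ℝ) < m ^ (n + 1) := pow_pos hμ0 _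
    rw [hudef]
    have key : ‖f (f^[n] z) - μ * f^[n] z‖ ≤ C * ((a ^ n) ^ 2 * r ^ 2) := by
      calc ‖f (f^[n] z) - μ * f^[n] z‖ ≤ C * ‖f^[n] z‖ ^ 2 := h1
        _ ≤ C * ((a ^ n) ^ 2 * r ^ 2) := by nlinarith
    calc (m ^ (n + 1))⁻¹ * ‖f (f^[n] z) - μ * f^[n] z‖
        ≤ (m ^ (n + 1))⁻¹ * (C * ((a ^ n) ^ 2 * r ^ 2)) := by
          apply mul_le_mul_of_nonneg_left key (by positivity)
      _ = C * r ^ 2 / m * (a ^ 2 / m) ^ n := by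
          rw [div_pow, ← pow_mul, ← pow_mul, Nat.mul_comm n 2, pow_succ]
          have hmn' : (m : ℝ) ≠ 0 := ne_of_gt hμ0
          field_simp
  have hss : Summable u := by
    apply Summable.mul_left
    apply summable_geometric_of_lt_one (by positivity)
    rw [div_lt_one hμ0]
    exact ha2
  clear_value u
  have htuo := tendstoUniformlyOn_tsum_nat hss hgb
  -- telescoping
  have htel : ∀ t : ℕ, ∀ z : ℂ, ∑ n ∈ Finset.range t, g n z = F t z - z := by
    intro t z
    rw [hgdef]
    rw [Finset.sum_range_sub (fun n => F n z)]
    congr 1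
    simp [hFdef]
  set h : ℂ → ℂ := fun z => z + ∑' n, g n z with hhdef
  have hFh : TendstoUniformlyOn F h atTop (closedBall (0:ℂ) r) := by
    rw [Metric.tendstoUniformlyOn_iff] at htuo ⊢
    intro ε hε
    filter_upwards [htuo ε hε] with t ht z hz
    have h1 := ht z hz
    have hd : h z - F t z = (∑' n, g n z) - ∑ n ∈ Finset.range t, g n z := by
      rw [htel, hhdef]; ring
    rw [dist_eq_norm] at h1 ⊢
    rw [hd]
    exact h1
  have hball : ball (0:ℂ) r ⊆ closedBall (0:ℂ) r := ball_subset_closedBall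
  have hFhl : TendstoLocallyUniformlyOn F h atTop (ball (0:ℂ) r) :=
    hFh.tendstoLocallyUniformlyOn.mono hball
  -- differentiability of iterates
  have hiter : ∀ n : ℕ, ∀ z ∈ ball (0:ℂ) r, DifferentiableAt ℂ (f^[n]) z ∧ f^[n] z ∈ ball (0:ℂ) r := by
    intro n
    induction n with
    | zero => intro z hz; exact ⟨differentiableAt_id, by simpa using hz⟩
    | succ n ih =>
      intro z hz
      obtain ⟨ih1, ih2⟩ := ih z hz
      rw [mem_ball, dist_eq_norm, sub_zero] at ih2
      constructor
      · rw [Function.iterate_succ']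
        exact DifferentiableAt.comp z ((hfan _ ih2.le).differentiableAt) ih1
      · rw [Function.iterate_succ_apply', mem_ball, dist_eq_norm, sub_zero]
        calc ‖f (f^[n] z)‖ ≤ a * ‖f^[n] z‖ := hK1 _ ih2.le
          _ ≤ 1 * ‖f^[n] z‖ := mul_le_mul_of_nonneg_right ha1.le (norm_nonneg _)
          _ < r := by rw [one_mul]; exact ih2
  have hdiff : ∀ n : ℕ, DifferentiableOn ℂ (F n) (ball (0:ℂ) r) := by
    intro n z hz
    exact (((hiter n z hz).1).const_mul _).differentiableWithinAt
  -- h is analytic at 0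
  have h0mem : (0:ℂ) ∈ ball (0:ℂ) r := by simpa using hr
  have hhd : DifferentiableOn ℂ h (ball (0:ℂ) r) :=
    hFhl.differentiableOn (Eventually.of_forall hdiff) isOpen_ball
  have hhan : AnalyticAt ℂ h 0 := hhd.analyticAt (isOpen_ball.mem_nhds h0mem)
  -- fixed point of iterates
  have hit0 : ∀ n : ℕ, f^[n] (0:ℂ) = 0 := fun n => Function.iterate_fixed hf0 n
  have hF0 : ∀ n : ℕ, F n 0 = 0 := by intro n; simp [hFdef, hit0 n]
  have hh0 : h 0 = 0 := by
    have t1 : Filter.Tendsto (fun n => F n 0) atTop (nhds (h 0)) := hFhl.tendsto_at h0mem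
    have t2 : Filter.Tendsto (fun n => F n 0) atTop (nhds 0) := by
      simp only [hF0]; exact tendsto_const_nhds
    exact tendsto_nhds_unique t1 t2
  -- derivative at 0
  have hdF : ∀ n : ℕ, HasDerivAt (f^[n]) (μ ^ n) 0 :=
    iterate_hasDerivAt_zero f μ (by rw [hμ]; exact hf.differentiableAt.hasDerivAt) hf0
  have hdF1 : ∀ n : ℕ, deriv (F n) 0 = 1 := by
    intro n
    have : HasDerivAt (F n) (μ⁻¹ ^ n * μ ^ n) 0 := (hdF n).const_mul _
    rw [this.deriv, inv_pow, inv_mul_cancel₀ (pow_ne_zero n hne)]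
  have hderiv : deriv h 0 = 1 := by
    have hd := hFhl.deriv (Eventually.of_forall hdiff) isOpen_ball
    have t1 : Filter.Tendsto (fun n => deriv (F n) 0) atTop (nhds (deriv h 0)) :=
      hd.tendsto_at h0mem
    have t2 : Filter.Tendsto (fun n => deriv (F n) 0) atTop (nhds 1) := by
      simp only [hdF1]; exact tendsto_const_nhds
    exact tendsto_nhds_unique t1 t2
  refine ⟨h, hhan, hh0, hderiv, ?_⟩
  have heq : ∀ z ∈ ball (0:ℂ) r, h (f z) = μ * h z := by
    intro z hz
    rw [mem_ball, dist_eq_norm, sub_zero] at hz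
    have hfz : f z ∈ ball (0:ℂ) r := by
      rw [mem_ball, dist_eq_norm, sub_zero]
      calc ‖f z‖ ≤ a * ‖z‖ := hK1 z hz.le
        _ ≤ 1 * ‖z‖ := mul_le_mul_of_nonneg_right ha1.le (norm_nonneg _)
        _ < r := by rw [one_mul]; exact hz
    have t1 : Filter.Tendsto (fun n => F n (f z)) atTop (nhds (h (f z))) :=
      hFhl.tendsto_at hfz
    have hFfz : ∀ n : ℕ, F n (f z) = μ * F (n + 1) z := by
      intro n
      simp only [hFdef]
      rw [← Function.iterate_succ_apply]
      rw [pow_succ]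
      field_simp
    have t2 : Filter.Tendsto (fun n => F n (f z)) atTop (nhds (μ * h z)) := by
      simp only [hFfz]
      apply Filter.Tendsto.const_mul
      have : Filter.Tendsto (fun n => F n z) atTop (nhds (h z)) :=
        hFhl.tendsto_at (by rw [mem_ball, dist_eq_norm, sub_zero]; exact hz)
      exact this.comp (tendsto_add_atTop_nat 1)
    exact tendsto_nhds_unique t1 t2
  filter_upwards [isOpen_ball.mem_nhds h0mem] with z hz using heq z hz

/-- Koenigs' theorem: every germ of holomorphic diffeomorphism `f` of `(ℂ,0)` with
`|f'(0)| ≠ 1` is analytically linearizable by a tangent-to-identity coordinate: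
there is `h` analytic at `0` with `h 0 = 0`, `h'(0) = 1` and
`h ∘ f = f'(0) · h` near `0`. -/
theorem koenigs_linearization
    (f : ℂ → ℂ) (hf : AnalyticAt ℂ f 0) (hf0 : f 0 = 0)
    (hne : deriv f 0 ≠ 0) (hhyp : ‖deriv f 0‖ ≠ 1) :
    ∃ h : ℂ → ℂ, AnalyticAt ℂ h 0 ∧ h 0 = 0 ∧ deriv h 0 = 1 ∧
      ∀ᶠ z in nhds (0 : ℂ), h (f z) = deriv f 0 * h z := by
  rcases lt_or_gt_of_ne hhyp with hlt | hgt
  · exact koenigs_aux f hf hf0 hne hlt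
  -- expanding case: pass to the local inverse
  obtain ⟨p, hp⟩ := id hf
  set μ := deriv f 0 with hμ
  set i : ℂ ≃L[ℂ] ℂ := ContinuousLinearEquiv.unitsEquivAut ℂ (Units.mk0 μ hne) with hidef
  have hstrict : HasStrictFDerivAt f (i : ℂ →L[ℂ] ℂ) 0 := by
    have h1 : HasStrictDerivAt f (p 1 fun _ => 1) 0 := hp.hasStrictDerivAt
    have h2 : (p 1 fun _ => 1) = μ := by rw [hμ, hp.deriv]
    rw [h2] at h1
    have h3 : (i : ℂ →L[ℂ] ℂ) = ContinuousLinearMap.smulRight (1 : ℂ →L[ℂ] ℂ) μ := by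
      ext x
      simp [hidef, ContinuousLinearEquiv.unitsEquivAut_apply, mul_comm]
    rw [h3]
    exact h1
  set Φ := hstrict.toOpenPartialHomeomorph f with hΦdef
  have hΦcoe : (Φ : ℂ → ℂ) = f := hstrict.toOpenPartialHomeomorph_coe
  have hΦmem : (0:ℂ) ∈ Φ.source := hstrict.mem_toOpenPartialHomeomorph_source
  have hp1 : p 1 = (continuousMultilinearCurryFin1 ℂ ℂ ℂ).symm (i : ℂ →L[ℂ] ℂ) := by
    refine ContinuousMultilinearMap.ext fun v => ?_
    have hv : v = fun _ => v 0 := funext fun j => by rw [Subsingleton.elim j 0]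
    rw [hv]
    have h1 : (p 1 fun _ => v 0) = (v 0) ^ 1 • p.coeff 1 :=
      FormalMultilinearSeries.apply_eq_pow_smul_coeff
    have hc1 : p.coeff 1 = μ := by
      rw [hμ, hp.deriv]; rfl
    rw [h1, hc1]
    simp [hidef, ContinuousLinearEquiv.unitsEquivAut_apply, mul_comm]
  have hpΦ : HasFPowerSeriesAt (Φ : ℂ → ℂ) p 0 := by rw [hΦcoe]; exact hp
  have hsymm := Φ.hasFPowerSeriesAt_symm hΦmem hpΦ hp1
  rw [hΦcoe, hf0] at hsymm
  set g : ℂ → ℂ := (Φ.symm : ℂ → ℂ) with hgdef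
  have hgan : AnalyticAt ℂ g 0 := ⟨_, hsymm⟩
  have hg0 : g 0 = 0 := by
    have := Φ.left_inv hΦmem
    rw [hΦcoe, hf0] at this
    exact this
  have hgd : deriv g 0 = μ⁻¹ := by
    rw [hsymm.deriv]
    rw [p.leftInv_coeff_one]
    simp [hidef, ContinuousLinearEquiv.unitsEquivAut_apply_symm]
  have hgne : deriv g 0 ≠ 0 := by rw [hgd]; exact inv_ne_zero hne
  have hglt : ‖deriv g 0‖ < 1 := by
    rw [hgd, norm_inv]
    rw [inv_lt_one_iff₀]
    right; exact hgt
  obtain ⟨h, hhan, hh0, hhd, hheq⟩ := koenigs_aux g hgan hg0 hgne hglt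
  rw [hgd] at hheq
  refine ⟨h, hhan, hh0, hhd, ?_⟩
  have e1 : Φ.source ∈ nhds (0:ℂ) := Φ.open_source.mem_nhds hΦmem
  have e2 : ∀ᶠ z in nhds (0:ℂ), h (g (f z)) = μ⁻¹ * h (f z) := by
    have hc := hf.continuousAt
    rw [ContinuousAt, hf0] at hc
    exact hc.eventually hheq
  filter_upwards [e1, e2] with z hz1 hz2
  have hgfz : g (f z) = z := by
    have := Φ.left_inv hz1
    rw [hΦcoe] at this
    exact this
  rw [hgfz] at hz2
  rw [hz2, ← mul_assoc, mul_inv_cancel₀ hne, one_mul]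
end
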